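/- Let α ∈ (0,1), λ ∈ ℂ, and suppose there exists m > 0 such that |E_α(λ t^α)| ≤ m·min{t^{−α},1} and |t^{α−1} E_{α,α}(λ t^α)| ≤ m·min{t^{−α−1}, t^{α−1}} for all t > 0. If f : [0,∞) → ℂ is continuous and bounded with lim_{t→∞} f(t) = 0, then the function u(t) = E_α(λ t^α) u_0 + ∫_0^t (t−s)^{α−1} E_{α,α}(λ (t−s)^α) f(s) ds satisfies lim_{t→∞} u(t) = 0 for every u_0 ∈ ℂ. -/

import Mathlib

open MeasureTheory Filter Real

private noncomputable def phi (α : ℝ) (r : ℝ) : ℝ := min (r ^ (-α - 1)) (r ^ (α - 1))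

private lemma phi_nonneg (α : ℝ) {r : ℝ} (hr : 0 ≤ r) : 0 ≤ phi α r :=
  le_min (Real.rpow_nonneg hr _) (Real.rpow_nonneg hr _)

private lemma phi_intInt (α : ℝ) (hα0 : 0 < α) {x : ℝ} (hx : 0 ≤ x) :
    IntervalIntegrable (phi α) volume 0 x := by
  have h1 : IntervalIntegrable (fun r : ℝ => r ^ (α - 1)) volume 0 x :=
    intervalIntegral.intervalIntegrable_rpow' (by linarith)
  refine h1.mono_fun' ?_ ?_
  · refine ContinuousOn.aestronglyMeasurable ?_ measurableSet_uIoc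
    have hc : ContinuousOn (fun r : ℝ => r) (Set.uIoc 0 x) := continuousOn_id
    have hne : ∀ r ∈ Set.uIoc 0 x, r ≠ 0 ∨ (0:ℝ) ≤ -α - 1 ∧ True := by
      intro r hr
      rw [Set.uIoc_of_le hx] at hr
      exact Or.inl (ne_of_gt hr.1)
    exact ContinuousOn.inf
      (hc.rpow_const fun r hr => ((hne r hr).imp id fun h => h.1))
      (hc.rpow_const fun r hr => ((hne r hr).imp id fun h => (by linarith [h.1] : (0:ℝ) ≤ α - 1)))
  · filter_upwards [ae_restrict_mem measurableSet_uIoc] with r hr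
    rw [Set.uIoc_of_le hx] at hr
    rw [Real.norm_eq_abs, abs_of_nonneg (phi_nonneg α hr.1.le)]
    exact min_le_right _ _

private lemma phi_int_le (α : ℝ) (hα0 : 0 < α) (hα1 : α < 1) {x : ℝ} (hx : 0 ≤ x) :
    ∫ r in (0:ℝ)..x, phi α r ≤ 2 / α := by
  have key : ∀ y : ℝ, 0 ≤ y → y ≤ 1 → ∫ r in (0:ℝ)..y, phi α r ≤ 1 / α := by
    intro y hy hy1
    have h1 : ∫ r in (0:ℝ)..y, phi α r ≤ ∫ r in (0:ℝ)..y, r ^ (α - 1) :=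
      intervalIntegral.integral_mono_on hy (phi_intInt α hα0 hy)
        (intervalIntegral.intervalIntegrable_rpow' (by linarith))
        (fun r _ => min_le_right _ _)
    have h2 : ∫ r in (0:ℝ)..y, r ^ (α - 1) = (y ^ α - (0:ℝ) ^ α) / α := by
      rw [integral_rpow (Or.inl (by linarith))]
      norm_num
    rw [h2, Real.zero_rpow hα0.ne', sub_zero] at h1
    refine h1.trans ?_
    have h3 : y ^ α ≤ 1 := Real.rpow_le_one hy hy1 hα0.le
    gcongr
  rcases le_or_gt x 1 with hx1 | hx1
  · refine (key x hx hx1).trans ?_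
    have h0 : (0:ℝ) ≤ 1 / α := by positivity
    have : (2:ℝ) / α = 1 / α + 1 / α := by ring
    rw [this]
    linarith
  · have h1x : IntervalIntegrable (phi α) volume 1 x :=
      (phi_intInt α hα0 hx).mono_set
        (by rw [Set.uIcc_of_le hx, Set.uIcc_of_le hx1.le]
            exact Set.Icc_subset_Icc (by norm_num) le_rfl)
    have hsplit : (∫ r in (0:ℝ)..1, phi α r) + (∫ r in (1:ℝ)..x, phi α r)
        = ∫ r in (0:ℝ)..x, phi α r :=
      intervalIntegral.integral_add_adjacent_intervals (phi_intInt α hα0 zero_le_one) h1x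
    have hnotmem : (0:ℝ) ∉ Set.uIcc (1:ℝ) x := by
      rw [Set.uIcc_of_le hx1.le]
      intro h
      exact absurd h.1 (by norm_num)
    have h2 : ∫ r in (1:ℝ)..x, phi α r ≤ ∫ r in (1:ℝ)..x, r ^ (-α - 1) :=
      intervalIntegral.integral_mono_on hx1.le h1x
        (intervalIntegral.intervalIntegrable_rpow (Or.inr hnotmem))
        (fun r _ => min_le_left _ _)
    have h3 : ∫ r in (1:ℝ)..x, r ^ (-α - 1) = (x ^ (-α) - 1) / (-α) := by
      rw [integral_rpow (Or.inr ⟨by intro h; apply hα0.ne'; linarith, hnotmem⟩)]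
      have h4 : -α - 1 + 1 = -α := by ring
      rw [h4, Real.one_rpow]
    have h5 : (x ^ (-α) - 1) / (-α) ≤ 1 / α := by
      have hx0 : (0:ℝ) ≤ x ^ (-α) := Real.rpow_nonneg (by linarith) _
      have heq : (x ^ (-α) - 1) / (-α) = (1 - x ^ (-α)) / α := by
        rw [div_neg, ← neg_div, neg_sub]
      rw [heq]
      gcongr
      linarith
    have h6 : ∫ r in (1:ℝ)..x, phi α r ≤ 1 / α := (h2.trans (h3 ▸ h5))
    have h7 := key 1 zero_le_one le_rfl
    rw [← hsplit]
    have : (2:ℝ) / α = 1 / α + 1 / α := by ring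
    rw [this]
    exact add_le_add h7 h6

theorem duhamel_decay (α : ℝ) (hα : α ∈ Set.Ioo (0:ℝ) 1) (lam : ℂ)
    (F G : ℝ → ℂ) (m : ℝ) (hm : 0 < m)
    (hF : ∀ t : ℝ, 0 < t → ‖F t‖ ≤ m * min (t ^ (-α)) 1)
    (hG : ∀ t : ℝ, 0 < t → ‖G t‖ ≤ m * min (t ^ (-α - 1)) (t ^ (α - 1)))
    (f : ℝ → ℂ) (hf : Continuous f) (hfb : ∃ B : ℝ, ∀ t : ℝ, ‖f t‖ ≤ B)
    (hf0 : Tendsto f atTop (nhds 0)) (u₀ : ℂ) :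
    Tendsto (fun t : ℝ => F t * u₀ + ∫ s in (0:ℝ)..t, G (t - s) * f s) atTop (nhds 0) := by
  obtain ⟨hα0, hα1⟩ := hα
  obtain ⟨B, hB⟩ := hfb
  have hB0 : 0 ≤ B := le_trans (norm_nonneg _) (hB 0)
  have habs : ∀ z : ℂ, ‖z‖ = ‖z‖ := fun z => rfl
  have h1 : Tendsto (fun t : ℝ => F t * u₀) atTop (nhds (0:ℂ)) := by
    have hg : Tendsto (fun t : ℝ => m * t ^ (-α) * ‖u₀‖) atTop (nhds 0) := by
      have h := ((tendsto_rpow_neg_atTop hα0).const_mul m).mul_const ‖u₀‖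
      simpa using h
    refine squeeze_zero_norm' ?_ hg
    filter_upwards [eventually_gt_atTop (0:ℝ)] with t ht
    rw [norm_mul, habs]
    have hFt : ‖F t‖ ≤ m * t ^ (-α) :=
      (hF t ht).trans (mul_le_mul_of_nonneg_left (min_le_left _ _) hm.le)
    exact mul_le_mul_of_nonneg_right hFt (norm_nonneg u₀)
  have h2 : Tendsto (fun t : ℝ => ∫ s in (0:ℝ)..t, G (t - s) * f s) atTop (nhds (0:ℂ)) := by
    rw [NormedAddCommGroup.tendsto_nhds_zero]
    intro ε hε
    set ε₂ : ℝ := ε * α / (4 * m) with hε₂def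
    have hε₂ : 0 < ε₂ := by positivity
    obtain ⟨T, hT⟩ := (Metric.tendsto_atTop.mp hf0) ε₂ hε₂
    have hT' : ∀ s : ℝ, T ≤ s → ‖f s‖ ≤ ε₂ := by
      intro s hs
      have h := hT s hs
      rw [dist_zero_right, habs] at h
      exact h.le
    have hto : Tendsto (fun t : ℝ => B * m * (t / 2) ^ (-α)) atTop (nhds 0) := by
      have hhalf : Tendsto (fun t : ℝ => t / 2) atTop atTop :=
        tendsto_id.atTop_div_const two_pos
      have h := ((tendsto_rpow_neg_atTop hα0).comp hhalf).const_mul (B * m)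
      simpa using h
    filter_upwards [hto.eventually (gt_mem_nhds (by positivity : (0:ℝ) < ε / 2)),
      eventually_ge_atTop (max (2 * T) 1)] with t hth htlarge
    have ht1 : (1:ℝ) ≤ t := le_trans (le_max_right _ _) htlarge
    have ht0 : (0:ℝ) < t := by linarith
    have hhalf : (0:ℝ) < t / 2 := by linarith
    have htT : T ≤ t / 2 := by
      have h := le_trans (le_max_left _ _) htlarge
      linarith
    set g : ℝ → ℝ := fun s => ‖f s‖ * (m * phi α (t - s)) with hgdef
    have hphiI : IntervalIntegrable (fun s => phi α (t - s)) volume 0 t := by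
      have h := ((phi_intInt α hα0 ht0.le).comp_sub_left t).symm
      simpa using h
    have hbase : IntegrableOn (fun s => m * phi α (t - s)) (Set.Ioc 0 t) :=
      (intervalIntegrable_iff_integrableOn_Ioc_of_le ht0.le).mp (hphiI.const_mul m)
    have hgI : IntegrableOn g (Set.Ioc 0 t) := by
      refine hbase.bdd_mul (c := B) ?_ (ae_of_all _ fun s => ?_)
      · exact ((continuous_norm.comp hf).aestronglyMeasurable).restrict
      · rw [Real.norm_eq_abs, abs_of_nonneg (norm_nonneg _)]
        exact hB s
    have hnorm : ‖∫ s in (0:ℝ)..t, G (t - s) * f s‖ ≤ ∫ s in Set.Ioc 0 t, g s := by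
      refine intervalIntegral.norm_integral_le_integral_norm_uIoc.trans ?_
      rw [Set.uIoc_of_le ht0.le, ← restrict_Ioo_eq_restrict_Ioc]
      refine integral_mono_of_nonneg (ae_of_all _ fun s => norm_nonneg _) ?_ ?_
      · rw [restrict_Ioo_eq_restrict_Ioc]; exact hgI
      · filter_upwards [ae_restrict_mem measurableSet_Ioo] with s hs
        have hts : 0 < t - s := by linarith [hs.2]
        rw [habs, norm_mul]
        calc ‖G (t - s)‖ * ‖f s‖
            ≤ (m * phi α (t - s)) * ‖f s‖ :=
              mul_le_mul_of_nonneg_right (hG _ hts) (norm_nonneg _)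
          _ = g s := mul_comm _ _
    have hsplitset : Set.Ioc (0:ℝ) (t/2) ∪ Set.Ioc (t/2) t = Set.Ioc 0 t :=
      Set.Ioc_union_Ioc_eq_Ioc (by linarith) (by linarith)
    have hg1 : IntegrableOn g (Set.Ioc 0 (t/2)) :=
      hgI.mono_set (by rw [← hsplitset]; exact Set.subset_union_left)
    have hg2 : IntegrableOn g (Set.Ioc (t/2) t) :=
      hgI.mono_set (by rw [← hsplitset]; exact Set.subset_union_right)
    have hsplit : ∫ s in Set.Ioc 0 t, g s
        = (∫ s in Set.Ioc 0 (t/2), g s) + ∫ s in Set.Ioc (t/2) t, g s := by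
      rw [← hsplitset, setIntegral_union (Set.Ioc_disjoint_Ioc_of_le le_rfl) measurableSet_Ioc hg1 hg2]
    have hp1 : ∫ s in Set.Ioc 0 (t/2), g s ≤ (t/2) * (B * (m * (t/2) ^ (-α - 1))) := by
      have hconst : IntegrableOn (fun _ : ℝ => B * (m * (t/2) ^ (-α - 1))) (Set.Ioc 0 (t/2)) :=
        integrableOn_const measure_Ioc_lt_top.ne
      have hmono : ∫ s in Set.Ioc 0 (t/2), g s
          ≤ ∫ _ in Set.Ioc 0 (t/2), B * (m * (t/2) ^ (-α - 1)) := by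
        refine setIntegral_mono_on hg1 hconst measurableSet_Ioc fun s hs => ?_
        have hts : t/2 ≤ t - s := by linarith [hs.2]
        have hphile : phi α (t - s) ≤ (t/2) ^ (-α - 1) :=
          (min_le_left _ _).trans (Real.rpow_le_rpow_of_nonpos hhalf hts (by linarith))
        have hphinn : 0 ≤ phi α (t - s) := phi_nonneg α (by linarith)
        exact mul_le_mul (hB s) (mul_le_mul_of_nonneg_left hphile hm.le)
          (mul_nonneg hm.le hphinn) hB0
      refine hmono.trans_eq ?_
      rw [setIntegral_const, Real.volume_real_Ioc_of_le (by linarith), smul_eq_mul,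
        sub_zero]
    have hp1' : (t/2) * (B * (m * (t/2) ^ (-α - 1))) = B * m * (t/2) ^ (-α) := by
      have hpow : (t/2) * (t/2) ^ (-α - 1) = (t/2) ^ (-α) := by
        have h := Real.rpow_add hhalf 1 (-α - 1)
        rw [Real.rpow_one, show (1:ℝ) + (-α - 1) = -α by ring] at h
        exact h.symm
      calc (t/2) * (B * (m * (t/2) ^ (-α - 1)))
          = B * m * ((t/2) * (t/2) ^ (-α - 1)) := by ring
        _ = B * m * (t/2) ^ (-α) := by rw [hpow]
    have hbase2 : IntegrableOn (fun s => m * phi α (t - s)) (Set.Ioc (t/2) t) :=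
      hbase.mono_set (by rw [← hsplitset]; exact Set.subset_union_right)
    have hp2 : ∫ s in Set.Ioc (t/2) t, g s
        ≤ ∫ s in Set.Ioc (t/2) t, ε₂ * (m * phi α (t - s)) := by
      refine setIntegral_mono_on hg2 (hbase2.const_mul ε₂) measurableSet_Ioc fun s hs => ?_
      have hfs : ‖f s‖ ≤ ε₂ := hT' s (le_trans htT hs.1.le)
      have hphinn : 0 ≤ phi α (t - s) := phi_nonneg α (by linarith [hs.2])
      exact mul_le_mul_of_nonneg_right hfs (mul_nonneg hm.le hphinn)
    have hval : ∫ s in Set.Ioc (t/2) t, phi α (t - s) = ∫ r in (0:ℝ)..(t/2), phi α r := by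
      rw [← intervalIntegral.integral_of_le (by linarith : t/2 ≤ t),
        intervalIntegral.integral_comp_sub_left (phi α) t]
      rw [show t - t/2 = t/2 by ring, sub_self]
    have hp2' : ∫ s in Set.Ioc (t/2) t, ε₂ * (m * phi α (t - s)) ≤ ε / 2 := by
      have hrw : ∫ s in Set.Ioc (t/2) t, ε₂ * (m * phi α (t - s))
          = (ε₂ * m) * ∫ s in Set.Ioc (t/2) t, phi α (t - s) := by
        rw [← integral_const_mul]
        congr 1
        ext s
        ring
      rw [hrw, hval]
      have hle : (ε₂ * m) * (∫ r in (0:ℝ)..(t/2), phi α r) ≤ (ε₂ * m) * (2 / α) :=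
        mul_le_mul_of_nonneg_left (phi_int_le α hα0 hα1 (by linarith)) (by positivity)
      refine hle.trans_eq ?_
      rw [hε₂def]
      field_simp
      ring
    have e1 : ∫ s in Set.Ioc 0 (t/2), g s < ε / 2 := lt_of_le_of_lt (hp1.trans_eq hp1') hth
    have e2 : ∫ s in Set.Ioc (t/2) t, g s ≤ ε / 2 := hp2.trans hp2'
    calc ‖∫ s in (0:ℝ)..t, G (t - s) * f s‖ ≤ ∫ s in Set.Ioc 0 t, g s := hnorm
      _ = (∫ s in Set.Ioc 0 (t/2), g s) + ∫ s in Set.Ioc (t/2) t, g s := hsplit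
      _ < ε / 2 + ε / 2 := by linarith
      _ = ε := by ring
  simpa using h1.add h2
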